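/- Let H be a complex Hilbert space and let A, B, C, D be closed subspaces of H with A ⊥ B and C ⊥ D. Then the 3OA law (orthoarguesian law) holds in the lattice of closed subspaces of H: (A ∨ B) ∩ (C ∨ D) ⊆ A ∨ (B ∩ (C ∨ ((A ∨ D) ∩ (B ∨ C)))), where X ∨ Y denotes the topological closure of the subspace sum X + Y. -/

import Mathlib

/-- If `A` and `B` are closed orthogonal subspaces of a Hilbert space, every element of the
closure of `A ⊔ B` decomposes as a sum of an element of `A` and an element of `B`. -/
lemma exists_add_of_mem_closure_sup_orth {H : Type*} [NormedAddCommGroup H]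
    [InnerProductSpace ℂ H] [CompleteSpace H] {A B : Submodule ℂ H}
    (hA : IsClosed (A : Set H)) (hB : IsClosed (B : Set H)) (hAB : A ≤ Bᗮ)
    {x : H} (hx : x ∈ (A ⊔ B).topologicalClosure) :
    ∃ a ∈ A, ∃ b ∈ B, x = a + b := by
  haveI : CompleteSpace A := hA.completeSpace_coe
  have hBA : B ≤ Aᗮ := le_trans B.le_orthogonal_orthogonal (Submodule.orthogonal_le hAB)
  set P : H →L[ℂ] H := A.subtypeL.comp (A.orthogonalProjectionOnto) with hP
  have hmaps : Set.MapsTo (fun y => y - P y) (A ⊔ B : Submodule ℂ H) (B : Set H) := by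
    intro y hy
    rcases Submodule.mem_sup.mp hy with ⟨a, ha, b, hb, rfl⟩
    have h1 : ((A.orthogonalProjectionOnto a : A) : H) = a :=
      Submodule.starProjection_eq_self_iff.mpr ha
    have h2 : A.orthogonalProjectionOnto b = 0 :=
      Submodule.orthogonalProjectionOnto_apply_of_mem_orthogonal (hBA hb)
    simp only [hP, ContinuousLinearMap.comp_apply, map_add, h1, h2, add_zero,
      Submodule.subtypeL_apply, Submodule.coe_add]
    simpa using hb
  have hfx : x - P x ∈ B := by
    have hcont : Continuous fun y : H => y - P y := continuous_id.sub P.continuous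
    have := map_mem_closure hcont hx hmaps
    rwa [hB.closure_eq] at this
  exact ⟨P x, Submodule.coe_mem _, x - P x, hfx, by abel⟩

theorem threeOA_in_closed_subspaces {H : Type*} [NormedAddCommGroup H]
    [InnerProductSpace ℂ H] [CompleteSpace H]
    (A B C D : Submodule ℂ H)
    (hA : IsClosed (A : Set H)) (hB : IsClosed (B : Set H))
    (hC : IsClosed (C : Set H)) (hD : IsClosed (D : Set H))
    (hAB : A ≤ Bᗮ) (hCD : C ≤ Dᗮ) :
    (A ⊔ B).topologicalClosure ⊓ (C ⊔ D).topologicalClosure ≤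
      (A ⊔ (B ⊓ (C ⊔ ((A ⊔ D).topologicalClosure ⊓
        (B ⊔ C).topologicalClosure)).topologicalClosure)).topologicalClosure := by
  intro x hx
  obtain ⟨a, ha, b, hb, hx1⟩ := exists_add_of_mem_closure_sup_orth hA hB hAB hx.1
  obtain ⟨c, hc, d, hd, hx2⟩ := exists_add_of_mem_closure_sup_orth hC hD hCD hx.2
  have habcd : a + b = c + d := hx1.symm.trans hx2
  have he : c - b ∈ (A ⊔ D).topologicalClosure ⊓ (B ⊔ C).topologicalClosure := by
    constructor
    · have : c - b = a - d := by
        rw [sub_eq_sub_iff_add_eq_add]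
        exact habcd.symm
      rw [this]
      exact Submodule.le_topologicalClosure _
        (sub_mem (Submodule.mem_sup_left ha) (Submodule.mem_sup_right hd))
    · exact Submodule.le_topologicalClosure _
        (sub_mem (Submodule.mem_sup_right hc) (Submodule.mem_sup_left hb))
  have hbmem : b ∈ B ⊓ (C ⊔ ((A ⊔ D).topologicalClosure ⊓
      (B ⊔ C).topologicalClosure)).topologicalClosure := by
    refine ⟨hb, Submodule.le_topologicalClosure _ ?_⟩
    have : b = c - (c - b) := by abel
    rw [this]
    exact sub_mem (Submodule.mem_sup_left hc) (Submodule.mem_sup_right he)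
  rw [hx1]
  exact Submodule.le_topologicalClosure _
    (add_mem (Submodule.mem_sup_left ha) (Submodule.mem_sup_right hbmem))
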